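/- arXiv:0901.3692 — 9 statements merged into one kernel-verified Lean document; each statement's English description precedes it below -/
import Mathlib

section
/- For every nonempty finite subset B of alternatives, the upward uncovered set of B is nonempty: there exists x ∈ B such that no y ∈ B upward covers x in B. -/
def upCovers {α : Type*} (dom : α → α → Prop) (B : Set α) (x y : α) : Prop :=
  dom x y ∧ ∀ z ∈ B, dom z x → dom z y

def upUncovered {α : Type*} (dom : α → α → Prop) (B : Set α) : Set α :=
  {x | x ∈ B ∧ ¬ ∃ y ∈ B, upCovers dom B y x}

def isUpCoveringSet {α : Type*} (dom : α → α → Prop) (M : Set α) : Prop :=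
  upUncovered dom M = M ∧ ∀ x ∉ M, x ∉ upUncovered dom (insert x M)

def isMinUpCoveringSet {α : Type*} (dom : α → α → Prop) (M : Set α) : Prop :=
  isUpCoveringSet dom M ∧ ∀ M' ⊂ M, ¬ isUpCoveringSet dom M'

theorem upUncovered_nonempty {α : Type*} (dom : α → α → Prop)
    (hasym : ∀ a b, dom a b → ¬ dom b a) (B : Set α)
    (hfin : B.Finite) (hne : B.Nonempty) :
    ∃ x ∈ B, ∀ y ∈ B, ¬ upCovers dom B y x := by
  haveI : Finite B := hfin
  set r : B → B → Prop := fun a b => upCovers dom B a b with hr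
  haveI : IsTrans B r := ⟨by
    rintro ⟨a, ha⟩ ⟨b, hb⟩ ⟨c, hc⟩ ⟨hab, hab'⟩ ⟨hbc, hbc'⟩
    exact ⟨hbc' a ha hab, fun z hz hza => hbc' z hz (hab' z hz hza)⟩⟩
  haveI : IsIrrefl B r := ⟨by
    rintro ⟨a, ha⟩ ⟨haa, _⟩
    exact hasym a a haa haa⟩
  obtain ⟨m, -, hm⟩ := (Finite.wellFounded_of_trans_of_irrefl r).has_min
    Set.univ ⟨⟨hne.choose, hne.choose_spec⟩, trivial⟩
  exact ⟨m, m.2, fun y hy hcov => hm ⟨y, hy⟩ trivial hcov⟩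
end

section
/- Every alternative that is undominated in A (i.e., no alternative in A dominates it) belongs to every upward covering set for A. -/
theorem undominated_mem_upCoveringSet {α : Type*} [Fintype α] (dom : α → α → Prop)
    (hasym : ∀ a b, dom a b → ¬ dom b a)
    (M : Set α) (hM : isUpCoveringSet dom M)
    (x : α) (hx : ∀ y : α, ¬ dom y x) :
    x ∈ M := by
  by_contra hxM
  have h := hM.2 x hxM
  simp only [upUncovered, Set.mem_setOf_eq, not_and, not_not] at h
  obtain ⟨y, -, hy⟩ := h (Set.mem_insert x M)
  exact hx y hy.1
end

section
/- Suppose a1, a2, a3 ∈ A form a 3-cycle a1 ≻ a2 ≻ a3 ≻ a1, no other dominations hold among a1, a2, a3, and no alternative in A \ {a1, a2, a3} dominates any of a1, a2, a3. Then every upward covering set for A contains all of a1, a2, a3. -/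
lemma key_mem {α : Type*} (dom : α → α → Prop) (hasym : ∀ a b, dom a b → ¬ dom b a)
    (a1 a2 a3 : α) (h12 : dom a1 a2) (h23 : dom a2 a3) (h31 : dom a3 a1)
    (h21 : ¬ dom a2 a1)
    (hd1 : ∀ z, dom z a1 → z = a3) (hd2 : ∀ z, dom z a2 → z = a1)
    (M : Set α) (hM : isUpCoveringSet dom M) : a1 ∈ M := by
  by_contra ha1
  have h1 := hM.2 a1 ha1
  simp only [upUncovered, upCovers, Set.mem_setOf_eq, not_and, not_not] at h1
  obtain ⟨y, hy, hdy, hcov⟩ := h1 (Set.mem_insert _ _)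
  rw [hd1 y hdy] at hy hcov
  have hne31 : a3 ≠ a1 := fun h => hasym a3 a1 h31 (h ▸ h31)
  have ha3M : a3 ∈ M := (Set.mem_insert_iff.mp hy).resolve_left hne31
  have hne21 : a2 ≠ a1 := fun h => hasym a1 a2 h12 (h ▸ h12)
  have ha2 : a2 ∉ M := fun hmem =>
    h21 (hcov a2 (Set.mem_insert_of_mem _ hmem) h23)
  have h2 := hM.2 a2 ha2
  simp only [upUncovered, upCovers, Set.mem_setOf_eq, not_and, not_not] at h2
  obtain ⟨y', hy', hdy', _⟩ := h2 (Set.mem_insert _ _)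
  rw [hd2 y' hdy'] at hy'
  exact ha1 ((Set.mem_insert_iff.mp hy').resolve_left hne21.symm)

theorem undominated_threeCycle_mem_upCoveringSet {α : Type*} [Fintype α]
    (dom : α → α → Prop) (hasym : ∀ a b, dom a b → ¬ dom b a)
    (a1 a2 a3 : α)
    (h12 : dom a1 a2) (h23 : dom a2 a3) (h31 : dom a3 a1)
    (h13 : ¬ dom a1 a3) (h21 : ¬ dom a2 a1) (h32 : ¬ dom a3 a2)
    (hout : ∀ z : α, z ∉ ({a1, a2, a3} : Set α) →
      ¬ dom z a1 ∧ ¬ dom z a2 ∧ ¬ dom z a3)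
    (M : Set α) (hM : isUpCoveringSet dom M) :
    a1 ∈ M ∧ a2 ∈ M ∧ a3 ∈ M := by
  have hd1 : ∀ z, dom z a1 → z = a3 := by
    intro z hz
    by_cases hmem : z ∈ ({a1, a2, a3} : Set α)
    · rcases hmem with h | h | h
      · exact absurd (h ▸ hz) (hasym a1 a1 (h ▸ hz))
      · exact absurd (h ▸ hz) h21
      · exact h
    · exact absurd hz (hout z hmem).1
  have hd2 : ∀ z, dom z a2 → z = a1 := by
    intro z hz
    by_cases hmem : z ∈ ({a1, a2, a3} : Set α)
    · rcases hmem with h | h | h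
      · exact h
      · exact absurd (h ▸ hz) (hasym a2 a2 (h ▸ hz))
      · exact absurd (h ▸ hz) h32
    · exact absurd hz (hout z hmem).2.1
  have hd3 : ∀ z, dom z a3 → z = a2 := by
    intro z hz
    by_cases hmem : z ∈ ({a1, a2, a3} : Set α)
    · rcases hmem with h | h | h
      · exact absurd (h ▸ hz) h13
      · exact h
      · exact absurd (h ▸ hz) (hasym a3 a3 (h ▸ hz))
    · exact absurd hz (hout z hmem).2.2
  exact ⟨key_mem dom hasym a1 a2 a3 h12 h23 h31 h21 hd1 hd2 M hM,
    key_mem dom hasym a2 a3 a1 h23 h31 h12 h32 hd2 hd3 M hM,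
    key_mem dom hasym a3 a1 a2 h31 h12 h23 h13 hd3 hd1 M hM⟩
end

section
/- McGarvey's theorem: for every asymmetric binary relation ≻ on a finite set A, there exist a finite number of voters, each with a strict linear order over A, such that for all x, y ∈ A, x ≻ y holds if and only if a strict majority of the voters rank x above y. -/
namespace McGarveyAux

open Classical

variable {α : Type*} [Fintype α]

/-- rank function: smaller rank = ranked higher by the voter. -/
noncomputable def rk (p : α × α) (v : Bool) (x : α) : ℤ :=
  if v then
    (if x = p.1 then 0 else if x = p.2 then 1 else ((Fintype.equivFin α x : ℕ) : ℤ) + 2)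
  else
    (if x = p.2 then 1 else if x = p.1 then 0 else -((Fintype.equivFin α x : ℕ) : ℤ) - 1)

lemma g_inj : Function.Injective (fun z : α => ((Fintype.equivFin α z : ℕ) : ℤ)) := by
  intro z w h
  simp only at h
  exact (Fintype.equivFin α).injective (Fin.ext (by exact_mod_cast h))

lemma rk_inj (p : α × α) (hp : p.1 ≠ p.2) (v : Bool) :
    Function.Injective (rk p v) := by
  intro x y h
  cases v <;> simp only [rk, Bool.false_eq_true, if_true, if_false] at h <;>
    split_ifs at h <;>
    first
      | (subst_vars; rfl)
      | (exact (Fintype.equivFin α).injective (Fin.ext (by omega)))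
      | (exfalso; omega)

lemma rk_sto (p : α × α) (hp : p.1 ≠ p.2) (v : Bool) :
    IsStrictTotalOrder α (fun x y => rk p v x < rk p v y) := by
  haveI h1 : IsTrichotomous α (fun x y => rk p v x < rk p v y) := by
    constructor
    intro x y
    rcases lt_trichotomy (rk p v x) (rk p v y) with h | h | h
    · exact fun h1 _ => absurd h h1
    · exact fun _ _ => rk_inj p hp v h
    · exact fun _ h2 => absurd h h2
  haveI h2 : IsIrrefl α (fun x y => rk p v x < rk p v y) := ⟨fun x => lt_irrefl _⟩
  haveI h3 : IsTrans α (fun x y => rk p v x < rk p v y) := ⟨fun a b c => lt_trans⟩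
  haveI h4 : IsStrictOrder α (fun x y => rk p v x < rk p v y) := ⟨⟩
  exact ⟨⟩

lemma rk_ab (p : α × α) (hp : p.1 ≠ p.2) (v : Bool) : rk p v p.1 < rk p v p.2 := by
  have h1 : p.2 ≠ p.1 := Ne.symm hp
  cases v <;> simp [rk, hp, h1]

/-- The swap lemma: except on the distinguished pair, the two voters of a pair
are exact opposites. -/
lemma rk_swap (p : α × α) (hp : p.1 ≠ p.2) {x y : α}
    (h1 : ¬ (x = p.1 ∧ y = p.2)) (h2 : ¬ (x = p.2 ∧ y = p.1)) :
    (rk p true x < rk p true y ↔ rk p false y < rk p false x) := by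
  simp only [rk, if_true, if_false]
  split_ifs <;>
    first
      | omega
      | tauto
      | simp_all
      | (exfalso; subst_vars; simp_all)

lemma card_bool (q : Bool → Prop) [Decidable (q true)] [Decidable (q false)] :
    Nat.card {v : Bool // q v} =
      (if q true then 1 else 0) + (if q false then 1 else 0) := by
  classical
  rw [Nat.card_eq_fintype_card, Fintype.card_subtype]
  have huniv : (Finset.univ : Finset Bool) = {true, false} := by decide
  rw [huniv]
  by_cases ht : q true <;> by_cases hf : q false <;>
    simp [Finset.filter_insert, Finset.filter_singleton, ht, hf]

/-- number of the two voters of pair `p` ranking `x` above `y`. -/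
noncomputable def cnt (p : α × α) (x y : α) : ℕ :=
  Nat.card {v : Bool // rk p v x < rk p v y}

lemma cnt_eq (p : α × α) (x y : α) :
    cnt p x y = (if rk p true x < rk p true y then 1 else 0)
      + (if rk p false x < rk p false y then 1 else 0) :=
  card_bool _

lemma cnt_fwd (p : α × α) (hp : p.1 ≠ p.2) : cnt p p.1 p.2 = 2 := by
  rw [cnt_eq, if_pos (rk_ab p hp true), if_pos (rk_ab p hp false)]

lemma cnt_bwd (p : α × α) (hp : p.1 ≠ p.2) : cnt p p.2 p.1 = 0 := by
  rw [cnt_eq, if_neg (not_lt.mpr (rk_ab p hp true).le),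
    if_neg (not_lt.mpr (rk_ab p hp false).le)]

lemma cnt_generic (p : α × α) (hp : p.1 ≠ p.2) {x y : α}
    (h1 : ¬ (x = p.1 ∧ y = p.2)) (h2 : ¬ (x = p.2 ∧ y = p.1)) :
    cnt p x y = cnt p y x := by
  have hs1 := rk_swap p hp h1 h2
  have hs2 := rk_swap p hp (x := y) (y := x) (fun h => h2 ⟨h.2, h.1⟩) (fun h => h1 ⟨h.2, h.1⟩)
  rw [cnt_eq, cnt_eq]
  by_cases h : rk p true x < rk p true y
  · rw [if_pos h, if_pos (hs1.1 h)]
    by_cases h' : rk p true y < rk p true x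
    · rw [if_pos h', if_pos (hs2.1 h')]
    · rw [if_neg h', if_neg (fun hh => h' (hs2.2 hh))]
  · rw [if_neg h, if_neg (fun hh => h (hs1.2 hh))]
    by_cases h' : rk p true y < rk p true x
    · rw [if_pos h', if_pos (hs2.1 h')]
    · rw [if_neg h', if_neg (fun hh => h' (hs2.2 hh))]

end McGarveyAux

open McGarveyAux in
theorem mcgarvey {α : Type*} [Fintype α] (dom : α → α → Prop)
    (hasym : ∀ a b, dom a b → ¬ dom b a) :
    ∃ (n : ℕ) (P : Fin n → α → α → Prop),
      (∀ i, IsStrictTotalOrder α (P i)) ∧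
      ∀ x y : α, dom x y ↔
        Nat.card {i : Fin n // P i x y} > Nat.card {i : Fin n // P i y x} := by
  classical
  have hne : ∀ {a b : α}, dom a b → a ≠ b := by
    intro a b hab h
    subst h
    exact hasym a a hab hab
  set T := {p : α × α // dom p.1 p.2} × Bool with hT
  refine ⟨Fintype.card T, fun i x y =>
      rk ((Fintype.equivFin T).symm i).1.1 ((Fintype.equivFin T).symm i).2 x
        < rk ((Fintype.equivFin T).symm i).1.1 ((Fintype.equivFin T).symm i).2 y, ?_, ?_⟩
  · intro i
    exact rk_sto _ (hne ((Fintype.equivFin T).symm i).1.2) _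
  · intro x y
    have key : ∀ u v : α,
        Nat.card {i : Fin (Fintype.card T) //
          rk ((Fintype.equivFin T).symm i).1.1 ((Fintype.equivFin T).symm i).2 u
            < rk ((Fintype.equivFin T).symm i).1.1 ((Fintype.equivFin T).symm i).2 v}
        = ∑ s : {p : α × α // dom p.1 p.2}, cnt s.1 u v := by
      intro u v
      have e1 : {i : Fin (Fintype.card T) //
          rk ((Fintype.equivFin T).symm i).1.1 ((Fintype.equivFin T).symm i).2 u
            < rk ((Fintype.equivFin T).symm i).1.1 ((Fintype.equivFin T).symm i).2 v}
          ≃ {j : T // rk j.1.1 j.2 u < rk j.1.1 j.2 v} :=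
        (Fintype.equivFin T).symm.subtypeEquiv (fun i => Iff.rfl)
      have e2 : {j : T // rk j.1.1 j.2 u < rk j.1.1 j.2 v}
          ≃ Σ s : {p : α × α // dom p.1 p.2}, {b : Bool // rk s.1 b u < rk s.1 b v} :=
        Equiv.subtypeProdEquivSigmaSubtype
          (fun (s : {p : α × α // dom p.1 p.2}) (b : Bool) => rk s.1 b u < rk s.1 b v)
      rw [Nat.card_congr (e1.trans e2), Nat.card_eq_fintype_card, Fintype.card_sigma]
      simp only [cnt, Nat.card_eq_fintype_card]
    rw [key, key]
    constructor
    · intro hxy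
      refine Finset.sum_lt_sum (fun s _ => ?_) ⟨⟨(x, y), hxy⟩, Finset.mem_univ _, ?_⟩
      · have hab : dom s.1.1 s.1.2 := s.2
        have e1 : cnt ((x, y) : α × α) x y = 2 := cnt_fwd (x, y) (hne hxy)
        have e2 : cnt ((x, y) : α × α) y x = 0 := cnt_bwd (x, y) (hne hxy)
        by_cases h1 : x = s.1.1 ∧ y = s.1.2
        · have hs : (s : α × α) = (x, y) := Prod.ext h1.1.symm h1.2.symm
          rw [hs, e1, e2]
          omega
        · by_cases h2 : x = s.1.2 ∧ y = s.1.1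
          · exfalso
            exact hasym x y hxy (h2.1 ▸ h2.2 ▸ hab)
          · exact le_of_eq ((cnt_generic _ (hne hab) h1 h2).symm)
      · have e1 : cnt ((x, y) : α × α) x y = 2 := cnt_fwd (x, y) (hne hxy)
        have e2 : cnt ((x, y) : α × α) y x = 0 := cnt_bwd (x, y) (hne hxy)
        show cnt ((x, y) : α × α) y x < cnt ((x, y) : α × α) x y
        rw [e1, e2]
        omega
    · intro h
      by_contra hxy
      have hle : ∑ s : {p : α × α // dom p.1 p.2}, cnt s.1 x y
          ≤ ∑ s : {p : α × α // dom p.1 p.2}, cnt s.1 y x := by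
        refine Finset.sum_le_sum (fun s _ => ?_)
        have hab : dom s.1.1 s.1.2 := s.2
        by_cases h1 : x = s.1.1 ∧ y = s.1.2
        · exact absurd (h1.1 ▸ h1.2 ▸ hab) hxy
        · by_cases h2 : x = s.1.2 ∧ y = s.1.1
          · have hs : (s : α × α) = (y, x) := Prod.ext h2.2.symm h2.1.symm
            have hyx : dom y x := by rw [hs] at hab; exact hab
            have e1 : cnt ((y, x) : α × α) y x = 2 := cnt_fwd (y, x) (hne hyx)
            have e2 : cnt ((y, x) : α × α) x y = 0 := cnt_bwd (y, x) (hne hyx)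
            rw [hs, e1, e2]
            omega
          · exact le_of_eq (cnt_generic _ (hne hab) h1 h2)
      omega
end

section
/- Every finite dominance graph admits at least one minimal upward covering set: for every finite set A with asymmetric dominance relation ≻, there exists M ⊆ A that is an upward covering set for A and such that no proper subset of M is an upward covering set for A. -/
open Classical in
/-- In a finite nonempty set, any transitive irreflexive relation has a maximal element. -/
lemma exists_maximal_rel {α : Type*} (r : α → α → Prop)
    (htrans : ∀ a b c, r a b → r b c → r a c)
    (hirr : ∀ a, ¬ r a a) :
    ∀ s : Finset α, s.Nonempty → ∃ x ∈ s, ∀ y ∈ s, ¬ r y x := by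
  intro s
  induction s using Finset.strongInduction with
  | _ s ih =>
    intro hs
    obtain ⟨x, hx⟩ := hs
    by_cases hmax : ∀ y ∈ s, ¬ r y x
    · exact ⟨x, hx, hmax⟩
    · push_neg at hmax
      obtain ⟨y, hy, hyx⟩ := hmax
      set t := s.filter (fun z => r z x) with ht
      have hxt : x ∉ t := by
        simp only [ht, Finset.mem_filter]
        exact fun h => hirr x h.2
      have hts : t ⊂ s := by
        refine Finset.ssubset_iff_of_subset (Finset.filter_subset _ _) |>.mpr ⟨x, hx, hxt⟩
      obtain ⟨m, hmt, hmmax⟩ := ih t hts ⟨y, by simp [ht, hy, hyx]⟩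
      have hm : r m x := (Finset.mem_filter.mp hmt).2
      refine ⟨m, Finset.filter_subset _ _ hmt, fun w hw hwm => ?_⟩
      exact hmmax w (Finset.mem_filter.mpr ⟨hw, htrans w m x hwm hm⟩) hwm

lemma upUncovered_subset {α : Type*} (dom : α → α → Prop) (B : Set α) :
    upUncovered dom B ⊆ B := fun _ h => h.1

lemma upCovers_mono {α : Type*} {dom : α → α → Prop} {B B' : Set α} {y x : α}
    (hBB : B' ⊆ B) (h : upCovers dom B y x) : upCovers dom B' y x :=
  ⟨h.1, fun z hz => h.2 z (hBB hz)⟩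

lemma upCovers_trans {α : Type*} {dom : α → α → Prop} {B : Set α} {y' y x : α}
    (hy' : y' ∈ B) (h1 : upCovers dom B y' y) (h2 : upCovers dom B y x) :
    upCovers dom B y' x :=
  ⟨h2.2 y' hy' h1.1, fun z hz hzy' => h2.2 z hz (h1.2 z hz hzy')⟩

/-- The chain of iterated upward uncovered sets. -/
def chainSet {α : Type*} (dom : α → α → Prop) (k : ℕ) : Set α :=
  (upUncovered dom)^[k] Set.univ

lemma chainSet_succ {α : Type*} (dom : α → α → Prop) (k : ℕ) :
    chainSet dom (k + 1) = upUncovered dom (chainSet dom k) := by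
  simp [chainSet, Function.iterate_succ_apply']

lemma chainSet_antitone {α : Type*} (dom : α → α → Prop) :
    ∀ {k m : ℕ}, k ≤ m → chainSet dom m ⊆ chainSet dom k := by
  intro k m hkm
  induction m with
  | zero =>
    have h0 : k = 0 := Nat.le_zero.mp hkm
    subst h0; exact fun _ h => h
  | succ n ih =>
    rcases Nat.lt_or_ge k (n+1) with h | h
    · have := ih (by omega)
      rw [chainSet_succ]
      exact (upUncovered_subset dom _).trans this
    · have : k = n + 1 := by omega
      subst this; exact fun _ h => h

open Classical in
/-- Coverers of `x` survive an iteration step: if `x` has a coverer in `chainSet k`, it has one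
in `chainSet (k+1)`. -/
lemma coverer_step {α : Type*} [Fintype α] (dom : α → α → Prop)
    (hasym : ∀ a b, dom a b → ¬ dom b a) (x : α) (k : ℕ)
    (h : ∃ w ∈ chainSet dom k, upCovers dom (chainSet dom k) w x) :
    ∃ w ∈ chainSet dom (k + 1), upCovers dom (chainSet dom (k + 1)) w x := by
  set B := chainSet dom k with hB
  set r : α → α → Prop := fun a b => a ∈ B ∧ upCovers dom B a b with hr
  have htrans : ∀ a b c, r a b → r b c → r a c := by
    rintro a b c ⟨ha, hab⟩ ⟨hb, hbc⟩
    exact ⟨ha, upCovers_trans ha hab hbc⟩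
  have hirr : ∀ a, ¬ r a a := by
    rintro a ⟨-, hd, -⟩
    exact hasym a a hd hd
  set T : Set α := {w | w ∈ B ∧ upCovers dom B w x} with hT
  obtain ⟨w0, hw0⟩ := h
  have hTfin : T.Finite := Set.toFinite T
  have hTne : hTfin.toFinset.Nonempty := ⟨w0, by simp [hT, Set.Finite.mem_toFinset]; exact hw0⟩
  obtain ⟨w, hwmem, hwmax⟩ := exists_maximal_rel r htrans hirr hTfin.toFinset hTne
  rw [Set.Finite.mem_toFinset] at hwmem
  obtain ⟨hwB, hwcov⟩ := hwmem
  have hwU : w ∈ upUncovered dom B := by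
    refine ⟨hwB, ?_⟩
    rintro ⟨y, hyB, hycov⟩
    have hyT : y ∈ T := ⟨hyB, upCovers_trans hyB hycov hwcov⟩
    exact hwmax y (Set.Finite.mem_toFinset _ |>.mpr hyT) ⟨hyB, hycov⟩
  rw [chainSet_succ]
  exact ⟨w, hwU, upCovers_mono (upUncovered_subset dom B) hwcov⟩

theorem exists_minUpCoveringSet {α : Type*} [Fintype α] (dom : α → α → Prop)
    (hasym : ∀ a b, dom a b → ¬ dom b a) :
    ∃ M : Set α, isUpCoveringSet dom M ∧
      ∀ M' ⊂ M, ¬ isUpCoveringSet dom M' := by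
  classical
  -- Step 1: find a fixpoint of the iteration.
  have hfix : ∃ N, chainSet dom (N + 1) = chainSet dom N := by
    by_contra hcon
    push_neg at hcon
    have hcard : ∀ k, (chainSet dom k).ncard + k ≤ Fintype.card α := by
      intro k
      induction k with
      | zero =>
        have h0 : chainSet dom 0 = Set.univ := rfl
        rw [h0, Set.ncard_univ, Nat.card_eq_fintype_card]
        omega
      | succ n ih =>
        have hss : chainSet dom (n + 1) ⊂ chainSet dom n :=
          lt_of_le_of_ne (chainSet_antitone dom (Nat.le_succ n)) (hcon n)
        have := Set.ncard_lt_ncard hss (Set.toFinite _)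
        omega
    have h1 := hcard (Fintype.card α)
    have h2 : (chainSet dom (Fintype.card α)).ncard = 0 := by omega
    have h3 : chainSet dom (Fintype.card α) = ∅ :=
      (Set.ncard_eq_zero (Set.toFinite _)).mp h2
    have h4 : chainSet dom (Fintype.card α + 1) = ∅ := by
      rw [chainSet_succ, h3]
      ext y; simp [upUncovered]
    exact hcon (Fintype.card α) (by rw [h3, h4])
  obtain ⟨N, hN⟩ := hfix
  set M := chainSet dom N with hM
  -- Step 2: M is an upward covering set.
  have hMcov : isUpCoveringSet dom M := by
    constructor
    · rw [hM, ← chainSet_succ, hN]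
    · intro x hxM hxU
      -- x was removed at some stage j
      have hx0 : x ∈ chainSet dom 0 := by simp [chainSet]
      have hexit : ∃ j, x ∈ chainSet dom j ∧ x ∉ chainSet dom (j + 1) := by
        by_contra hcon
        push_neg at hcon
        have : ∀ n, x ∈ chainSet dom n := by
          intro n
          induction n with
          | zero => exact hx0
          | succ n ih => exact hcon n ih
        exact hxM (this N)
      obtain ⟨j, hxj, hxj1⟩ := hexit
      have hjN : j ≤ N := by
        by_contra hlt
        exact hxM (chainSet_antitone dom (by omega) hxj)
      -- x has a coverer in chainSet j
      have hcov0 : ∃ w ∈ chainSet dom j, upCovers dom (chainSet dom j) w x := by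
        rw [chainSet_succ] at hxj1
        by_contra hcon
        exact hxj1 ⟨hxj, by push_neg at hcon ⊢; exact fun y hy => hcon y hy⟩
      -- the coverer propagates up to stage N
      have hcovN : ∀ i, ∃ w ∈ chainSet dom (j + i), upCovers dom (chainSet dom (j + i)) w x := by
        intro i
        induction i with
        | zero => exact hcov0
        | succ n ih => exact coverer_step dom hasym x (j + n) ih
      obtain ⟨w, hwM, hwcov⟩ := hcovN (N - j)
      rw [show j + (N - j) = N by omega] at hwM hwcov
      -- w covers x in insert x M, contradiction with hxU
      obtain ⟨hxmem, hxnc⟩ := hxU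
      refine hxnc ⟨w, Set.mem_insert_of_mem x hwM, hwcov.1, ?_⟩
      intro z hz hzw
      rcases Set.mem_insert_iff.mp hz with rfl | hzM
      · exact absurd hwcov.1 (hasym z w hzw)
      · exact hwcov.2 z hzM hzw
  -- Step 3: extract a minimal upward covering set by strong induction on cardinality.
  have key : ∀ n, ∀ M₁ : Set α, M₁.ncard = n → isUpCoveringSet dom M₁ →
      ∃ M₀ : Set α, isUpCoveringSet dom M₀ ∧ ∀ M' ⊂ M₀, ¬ isUpCoveringSet dom M' := by
    intro n
    induction n using Nat.strong_induction_on with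
    | _ n ih =>
      intro M₁ hcard hM₁
      by_cases hmin : ∀ M' ⊂ M₁, ¬ isUpCoveringSet dom M'
      · exact ⟨M₁, hM₁, hmin⟩
      · push_neg at hmin
        obtain ⟨M', hM'ss, hM'cov⟩ := hmin
        have hlt : M'.ncard < n := hcard ▸ Set.ncard_lt_ncard hM'ss (Set.toFinite _)
        exact ih M'.ncard hlt M' rfl hM'cov
  exact key M.ncard M rfl hMcov
end

section
/- In the Brandt–Fischer upward construction from a CNF formula φ, the formula φ is satisfiable if and only if the designated alternative d is contained in some minimal upward covering set for A. -/
inductive BFAlt (n r : ℕ) where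
  | X : Fin n → BFAlt n r
  | Xb : Fin n → BFAlt n r
  | X' : Fin n → BFAlt n r
  | Xb' : Fin n → BFAlt n r
  | Y : Fin r → BFAlt n r
  | D : BFAlt n r

inductive bfDom {n r : ℕ} (pos neg : Fin n → Fin r → Prop) :
    BFAlt n r → BFAlt n r → Prop where
  | cyc1 (i : Fin n) : bfDom pos neg (.X i) (.Xb i)
  | cyc2 (i : Fin n) : bfDom pos neg (.Xb i) (.X' i)
  | cyc3 (i : Fin n) : bfDom pos neg (.X' i) (.Xb' i)
  | cyc4 (i : Fin n) : bfDom pos neg (.Xb' i) (.X i)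
  | pos_lit (i : Fin n) (j : Fin r) : pos i j → bfDom pos neg (.X i) (.Y j)
  | neg_lit (i : Fin n) (j : Fin r) : neg i j → bfDom pos neg (.Xb i) (.Y j)
  | yd (j : Fin r) : bfDom pos neg (.Y j) .D

namespace BFaux

variable {n r : ℕ} {pos neg : Fin n → Fin r → Prop}

/-- clause j is satisfied by assignment a -/
def Sat (pos neg : Fin n → Fin r → Prop) (a : Fin n → Bool) (j : Fin r) : Prop :=
  ∃ i : Fin n, (pos i j ∧ a i = true) ∨ (neg i j ∧ a i = false)

/-- The canonical covering set associated to an assignment. -/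
def Ma (pos neg : Fin n → Fin r → Prop) (a : Fin n → Bool) : Set (BFAlt n r) :=
  fun v => match v with
  | .X i => a i = true
  | .Xb i => a i = false
  | .X' i => a i = true
  | .Xb' i => a i = false
  | .Y j => ¬ Sat pos neg a j
  | .D => ∀ j, Sat pos neg a j

@[simp] lemma mem_X {a : Fin n → Bool} {i : Fin n} :
    BFAlt.X i ∈ Ma pos neg a ↔ a i = true := Iff.rfl
@[simp] lemma mem_Xb {a : Fin n → Bool} {i : Fin n} :
    BFAlt.Xb i ∈ Ma pos neg a ↔ a i = false := Iff.rfl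
@[simp] lemma mem_X' {a : Fin n → Bool} {i : Fin n} :
    BFAlt.X' i ∈ Ma pos neg a ↔ a i = true := Iff.rfl
@[simp] lemma mem_Xb' {a : Fin n → Bool} {i : Fin n} :
    BFAlt.Xb' i ∈ Ma pos neg a ↔ a i = false := Iff.rfl
@[simp] lemma mem_Y {a : Fin n → Bool} {j : Fin r} :
    BFAlt.Y j ∈ Ma pos neg a ↔ ¬ Sat pos neg a j := Iff.rfl
@[simp] lemma mem_D {a : Fin n → Bool} :
    BFAlt.D ∈ Ma pos neg a ↔ ∀ j, Sat pos neg a j := Iff.rfl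

lemma no_self_dom (v : BFAlt n r) : ¬ bfDom pos neg v v := by
  intro h; cases h

/-- extraction of external stability -/
lemma ext_cover {M : Set (BFAlt n r)} (hM : isUpCoveringSet (bfDom pos neg) M)
    {x : BFAlt n r} (hx : x ∉ M) :
    ∃ y ∈ M, bfDom pos neg y x ∧
      ∀ z ∈ insert x M, bfDom pos neg z y → bfDom pos neg z x := by
  have h := hM.2 x hx
  simp only [upUncovered, Set.mem_setOf_eq, not_and, not_not] at h
  obtain ⟨y, hy, hdom, hcov⟩ := h (Set.mem_insert x M)
  rcases hy with rfl | hy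
  · exact absurd hdom (no_self_dom _)
  · exact ⟨y, hy, hdom, hcov⟩

lemma notX {M : Set (BFAlt n r)} (hM : isUpCoveringSet (bfDom pos neg) M)
    {i : Fin n} (h : BFAlt.X i ∉ M) : BFAlt.Xb' i ∈ M := by
  obtain ⟨y, hy, hdom, _⟩ := ext_cover hM h
  cases hdom
  exact hy

lemma notXb {M : Set (BFAlt n r)} (hM : isUpCoveringSet (bfDom pos neg) M)
    {i : Fin n} (h : BFAlt.Xb i ∉ M) : BFAlt.X i ∈ M := by
  obtain ⟨y, hy, hdom, _⟩ := ext_cover hM h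
  cases hdom
  exact hy

lemma notX' {M : Set (BFAlt n r)} (hM : isUpCoveringSet (bfDom pos neg) M)
    {i : Fin n} (h : BFAlt.X' i ∉ M) : BFAlt.X i ∉ M := by
  obtain ⟨y, hy, hdom, hcov⟩ := ext_cover hM h
  cases hdom
  intro hX
  have := hcov (BFAlt.X i) (Set.mem_insert_of_mem _ hX) (bfDom.cyc1 i)
  cases this

/-- if Y j is outside a covering set, clause j is "pair-satisfied" -/
lemma notY {M : Set (BFAlt n r)} (hM : isUpCoveringSet (bfDom pos neg) M)
    {j : Fin r} (h : BFAlt.Y j ∉ M) :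
    ∃ i : Fin n, (pos i j ∧ BFAlt.X i ∈ M) ∨
      (neg i j ∧ BFAlt.Xb i ∈ M ∧ (BFAlt.X i ∈ M → pos i j)) := by
  obtain ⟨y, hy, hdom, hcov⟩ := ext_cover hM h
  cases hdom with
  | pos_lit i j hp => exact ⟨i, Or.inl ⟨hp, hy⟩⟩
  | neg_lit i j hn =>
    refine ⟨i, Or.inr ⟨hn, hy, ?_⟩⟩
    intro hX
    have := hcov (BFAlt.X i) (Set.mem_insert_of_mem _ hX) (bfDom.cyc1 i)
    cases this
    assumption

/-- Ma is always an upward covering set. -/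
lemma Ma_covering (pos neg : Fin n → Fin r → Prop) (a : Fin n → Bool) :
    isUpCoveringSet (bfDom pos neg) (Ma pos neg a) := by
  constructor
  · -- internal stability: there are no dominance edges inside Ma at all
    ext x
    simp only [upUncovered, Set.mem_setOf_eq]
    constructor
    · exact fun h => h.1
    · intro hx
      refine ⟨hx, ?_⟩
      rintro ⟨y, hy, hdom, -⟩
      cases hdom with
      | cyc1 i =>
        have h1 : a i = true := hy
        have h2 : a i = false := hx
        simp [h1] at h2
      | cyc2 i =>
        have h1 : a i = false := hy
        have h2 : a i = true := hx
        simp [h1] at h2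
      | cyc3 i =>
        have h1 : a i = true := hy
        have h2 : a i = false := hx
        simp [h1] at h2
      | cyc4 i =>
        have h1 : a i = false := hy
        have h2 : a i = true := hx
        simp [h1] at h2
      | pos_lit i j hp =>
        exact (hx : ¬ Sat pos neg a j) ⟨i, Or.inl ⟨hp, hy⟩⟩
      | neg_lit i j hn =>
        exact (hx : ¬ Sat pos neg a j) ⟨i, Or.inr ⟨hn, hy⟩⟩
      | yd j =>
        exact (hy : ¬ Sat pos neg a j) ((hx : ∀ j, Sat pos neg a j) j)
  · intro x hx
    simp only [upUncovered, Set.mem_setOf_eq, not_and, not_not]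
    intro _
    match x with
    | .X i =>
      have ha : a i = false := by
        have : ¬ a i = true := hx
        simpa using this
      refine ⟨BFAlt.Xb' i, Set.mem_insert_of_mem _ (mem_Xb'.mpr ha),
        bfDom.cyc4 i, ?_⟩
      intro z hz hdom
      cases hdom
      exfalso
      rcases hz with hz | hz
      · cases hz
      · have : a i = true := hz
        simp [ha] at this
    | .Xb i =>
      have ha : a i = true := by
        have : ¬ a i = false := hx
        simpa using this
      refine ⟨BFAlt.X i, Set.mem_insert_of_mem _ (mem_X.mpr ha),
        bfDom.cyc1 i, ?_⟩
      intro z hz hdom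
      cases hdom
      exfalso
      rcases hz with hz | hz
      · cases hz
      · have : a i = false := hz
        simp [ha] at this
    | .X' i =>
      have ha : a i = false := by
        have : ¬ a i = true := hx
        simpa using this
      refine ⟨BFAlt.Xb i, Set.mem_insert_of_mem _ (mem_Xb.mpr ha),
        bfDom.cyc2 i, ?_⟩
      intro z hz hdom
      cases hdom
      exfalso
      rcases hz with hz | hz
      · cases hz
      · have : a i = true := hz
        simp [ha] at this
    | .Xb' i =>
      have ha : a i = true := by
        have : ¬ a i = false := hx
        simpa using this
      refine ⟨BFAlt.X' i, Set.mem_insert_of_mem _ (mem_X'.mpr ha),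
        bfDom.cyc3 i, ?_⟩
      intro z hz hdom
      cases hdom
      exfalso
      rcases hz with hz | hz
      · cases hz
      · have : a i = false := hz
        simp [ha] at this
    | .Y j =>
      have hs : Sat pos neg a j := by
        have : ¬ ¬ Sat pos neg a j := hx
        exact not_not.mp this
      obtain ⟨i, hi⟩ := hs
      rcases hi with ⟨hp, ha⟩ | ⟨hn, ha⟩
      · refine ⟨BFAlt.X i, Set.mem_insert_of_mem _ (mem_X.mpr ha),
          bfDom.pos_lit i j hp, ?_⟩
        intro z hz hdom
        cases hdom
        exfalso
        rcases hz with hz | hz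
        · cases hz
        · have : a i = false := hz
          simp [ha] at this
      · refine ⟨BFAlt.Xb i, Set.mem_insert_of_mem _ (mem_Xb.mpr ha),
          bfDom.neg_lit i j hn, ?_⟩
        intro z hz hdom
        cases hdom
        exfalso
        rcases hz with hz | hz
        · cases hz
        · have : a i = true := hz
          simp [ha] at this
    | .D =>
      have : ¬ ∀ j, Sat pos neg a j := hx
      push_neg at this
      obtain ⟨j, hj⟩ := this
      refine ⟨BFAlt.Y j, Set.mem_insert_of_mem _ (mem_Y.mpr hj),
        bfDom.yd j, ?_⟩
      intro z hz hdom
      exfalso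
      cases hdom with
      | pos_lit i j hp =>
        rcases hz with hz | hz
        · cases hz
        · exact hj ⟨i, Or.inl ⟨hp, hz⟩⟩
      | neg_lit i j hn =>
        rcases hz with hz | hz
        · cases hz
        · exact hj ⟨i, Or.inr ⟨hn, hz⟩⟩

/-- If M is a covering set containing D with X i ∈ M ↔ a i = true, then Ma ⊆ M. -/
lemma Ma_subset {M : Set (BFAlt n r)} (hM : isUpCoveringSet (bfDom pos neg) M)
    {a : Fin n → Bool} (hX : ∀ i, a i = true ↔ BFAlt.X i ∈ M)
    (hD : BFAlt.D ∈ M) : Ma pos neg a ⊆ M := by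
  intro v hv
  match v with
  | .X i => exact (hX i).1 hv
  | .X' i =>
    have hXi : BFAlt.X i ∈ M := (hX i).1 hv
    by_contra h
    exact notX' hM h hXi
  | .Xb i =>
    have hXi : BFAlt.X i ∉ M := by
      intro h
      have h1 := (hX i).2 h
      have h2 : a i = false := hv
      simp [h1] at h2
    by_contra h
    exact hXi (notXb hM h)
  | .Xb' i =>
    have hXi : BFAlt.X i ∉ M := by
      intro h
      have h1 := (hX i).2 h
      have h2 : a i = false := hv
      simp [h1] at h2
    exact notX hM hXi
  | .Y j =>
    have hns : ¬ Sat pos neg a j := hv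
    by_contra h
    obtain ⟨i, hi⟩ := notY hM h
    rcases hi with ⟨hp, hXi⟩ | ⟨hn, hXbi, himp⟩
    · exact hns ⟨i, Or.inl ⟨hp, (hX i).2 hXi⟩⟩
    · by_cases hXi : BFAlt.X i ∈ M
      · exact hns ⟨i, Or.inl ⟨himp hXi, (hX i).2 hXi⟩⟩
      · have : a i = false := by
          have := (hX i).not.2 hXi
          simpa using this
        exact hns ⟨i, Or.inr ⟨hn, this⟩⟩
  | .D => exact hD

end BFaux

open BFaux

theorem bf_sat_iff_d_in_some_minimal {n r : ℕ} (pos neg : Fin n → Fin r → Prop) :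
    (∃ a : Fin n → Bool, ∀ j : Fin r, ∃ i : Fin n,
        (pos i j ∧ a i = true) ∨ (neg i j ∧ a i = false)) ↔
    (∃ M : Set (BFAlt n r),
        isMinUpCoveringSet (bfDom pos neg) M ∧ BFAlt.D ∈ M) := by
  constructor
  · rintro ⟨a, hsat⟩
    refine ⟨Ma pos neg a, ⟨⟨Ma_covering pos neg a, ?_⟩, hsat⟩⟩
    intro M' hss hM'
    rw [Set.ssubset_def] at hss
    apply hss.2
    -- show Ma ⊆ M'
    have hX : ∀ i, a i = true ↔ BFAlt.X i ∈ M' := by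
      intro i
      constructor
      · intro ha
        have hXb : BFAlt.Xb i ∉ M' := by
          intro h
          have h2 : a i = false := hss.1 h
          simp [ha] at h2
        exact notXb hM' hXb
      · intro h
        exact hss.1 h
    have hD : BFAlt.D ∈ M' := by
      by_contra h
      obtain ⟨y, hy, hdom, -⟩ := ext_cover hM' h
      cases hdom with
      | yd j => exact (hss.1 hy : ¬ Sat pos neg a j) (hsat j)
    exact Ma_subset hM' hX hD
  · rintro ⟨M, ⟨hM, hmin⟩, hD⟩
    classical
    set a : Fin n → Bool := fun i => if BFAlt.X i ∈ M then true else false with ha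
    have hX : ∀ i, a i = true ↔ BFAlt.X i ∈ M := by
      intro i
      by_cases h : BFAlt.X i ∈ M <;> simp [ha, h]
    have hsub : Ma pos neg a ⊆ M := Ma_subset hM hX hD
    have heq : Ma pos neg a = M := by
      by_contra hne
      exact hmin (Ma pos neg a) (hsub.ssubset_of_ne hne) (Ma_covering pos neg a)
    refine ⟨a, ?_⟩
    rw [← heq] at hD
    exact hD
end

section
/- In the Brandt–Fischer upward construction from a CNF formula φ, every minimal upward covering set M for A contains, for each variable v_i, exactly one of the pairs {x_i, x_i'} or {x̄_i, x̄_i'}, and contains no other alternatives from the 4-cycle of v_i. -/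
-- scratch: basic lemmas
section
variable {n r : ℕ} {pos neg : Fin n → Fin r → Prop}

lemma bf_irrefl (x : BFAlt n r) : ¬ bfDom pos neg x x := by intro h; cases h

lemma inv_X {z : BFAlt n r} {k : Fin n} (h : bfDom pos neg z (.X k)) : z = .Xb' k := by
  cases h; rfl

lemma inv_Xb {z : BFAlt n r} {k : Fin n} (h : bfDom pos neg z (.Xb k)) : z = .X k := by
  cases h; rfl

lemma inv_X' {z : BFAlt n r} {k : Fin n} (h : bfDom pos neg z (.X' k)) : z = .Xb k := by
  cases h; rfl

lemma inv_Xb' {z : BFAlt n r} {k : Fin n} (h : bfDom pos neg z (.Xb' k)) : z = .X' k := by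
  cases h; rfl

lemma inv_Y {z : BFAlt n r} {j : Fin r} (h : bfDom pos neg z (.Y j)) :
    (∃ k, z = .X k ∧ pos k j) ∨ (∃ k, z = .Xb k ∧ neg k j) := by
  cases h with
  | pos_lit k _ hp => exact Or.inl ⟨k, rfl, hp⟩
  | neg_lit k _ hn => exact Or.inr ⟨k, rfl, hn⟩

lemma inv_D {z : BFAlt n r} (h : bfDom pos neg z .D) : ∃ j, z = .Y j := by
  cases h with | yd j => exact ⟨j, rfl⟩

lemma IS {M : Set (BFAlt n r)} (h1 : upUncovered (bfDom pos neg) M = M)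
    {x y : BFAlt n r} (hx : x ∈ M) (hy : y ∈ M) (hxy : bfDom pos neg y x) :
    ∃ z ∈ M, bfDom pos neg z y ∧ ¬ bfDom pos neg z x := by
  have hx' : x ∈ upUncovered (bfDom pos neg) M := h1.symm ▸ hx
  by_contra hcon
  push_neg at hcon
  exact hx'.2 ⟨y, hy, hxy, hcon⟩

lemma ES {M : Set (BFAlt n r)}
    (h2 : ∀ x ∉ M, x ∉ upUncovered (bfDom pos neg) (insert x M))
    {x : BFAlt n r} (hx : x ∉ M) :
    ∃ y ∈ M, bfDom pos neg y x ∧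
      ∀ z ∈ insert x M, bfDom pos neg z y → bfDom pos neg z x := by
  have h := h2 x hx
  simp only [upUncovered, Set.mem_setOf_eq, not_and, not_not] at h
  obtain ⟨y, hy, hcov⟩ := h (Set.mem_insert x M)
  rcases hy with rfl | hyM
  · exact absurd hcov.1 (bf_irrefl _)
  · exact ⟨y, hyM, hcov.1, hcov.2⟩

end

section
variable {n r : ℕ}

def bfBase (pos : Fin n → Fin r → Prop) (M : Set (BFAlt n r)) (i : Fin n) :
    Set (BFAlt n r) :=
  {w | w ∈ M ∧ w ≠ .Xb i ∧ w ≠ .Xb' i ∧ ∀ j, w = .Y j → ¬ pos i j}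

def bfP (pos neg : Fin n → Fin r → Prop) (M : Set (BFAlt n r)) (i : Fin n) : Prop :=
  ∃ j, (BFAlt.Y j) ∈ bfBase pos M i ∧ ∀ z ∈ bfBase pos M i, ¬ bfDom pos neg z (.Y j)

def bfM (pos neg : Fin n → Fin r → Prop) (M : Set (BFAlt n r)) (i : Fin n) :
    Set (BFAlt n r) :=
  {w | w ∈ bfBase pos M i ∧ (w = .D → ¬ bfP pos neg M i)}

variable {pos neg : Fin n → Fin r → Prop}

lemma memX {M : Set (BFAlt n r)} {i : Fin n} {k : Fin n} (h : BFAlt.X k ∈ M) :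
    (BFAlt.X k) ∈ bfM pos neg M i := by
  refine ⟨⟨h, ?_, ?_, ?_⟩, ?_⟩
  · intro hh; cases hh
  · intro hh; cases hh
  · intro j hh; cases hh
  · intro hh; cases hh

lemma memX' {M : Set (BFAlt n r)} {i : Fin n} {k : Fin n} (h : BFAlt.X' k ∈ M) :
    (BFAlt.X' k) ∈ bfM pos neg M i := by
  refine ⟨⟨h, ?_, ?_, ?_⟩, ?_⟩
  · intro hh; cases hh
  · intro hh; cases hh
  · intro j hh; cases hh
  · intro hh; cases hh

lemma memXb {M : Set (BFAlt n r)} {i : Fin n} {k : Fin n} (hk : k ≠ i)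
    (h : BFAlt.Xb k ∈ M) : (BFAlt.Xb k) ∈ bfM pos neg M i := by
  refine ⟨⟨h, ?_, ?_, ?_⟩, ?_⟩
  · intro hh; injection hh with e; exact hk e
  · intro hh; cases hh
  · intro j hh; cases hh
  · intro hh; cases hh

lemma memXb' {M : Set (BFAlt n r)} {i : Fin n} {k : Fin n} (hk : k ≠ i)
    (h : BFAlt.Xb' k ∈ M) : (BFAlt.Xb' k) ∈ bfM pos neg M i := by
  refine ⟨⟨h, ?_, ?_, ?_⟩, ?_⟩
  · intro hh; cases hh
  · intro hh; injection hh with e; exact hk e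
  · intro j hh; cases hh
  · intro hh; cases hh

lemma memY {M : Set (BFAlt n r)} {i : Fin n} {j : Fin r} (h : BFAlt.Y j ∈ M)
    (hnp : ¬ pos i j) : (BFAlt.Y j) ∈ bfM pos neg M i := by
  refine ⟨⟨h, ?_, ?_, ?_⟩, ?_⟩
  · intro hh; cases hh
  · intro hh; cases hh
  · intro j' hh; injection hh with e; subst e; exact hnp
  · intro hh; cases hh

lemma memYbase {M : Set (BFAlt n r)} {i : Fin n} {j : Fin r}
    (h : (BFAlt.Y j) ∈ bfBase pos M i) : (BFAlt.Y j) ∈ bfM pos neg M i := by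
  refine ⟨h, ?_⟩
  intro hh; cases hh

lemma memD {M : Set (BFAlt n r)} {i : Fin n} (h : BFAlt.D ∈ M)
    (hnp : ¬ bfP pos neg M i) : (BFAlt.D : BFAlt n r) ∈ bfM pos neg M i := by
  refine ⟨⟨h, ?_, ?_, ?_⟩, fun _ => hnp⟩
  · intro hh; cases hh
  · intro hh; cases hh
  · intro j hh; cases hh

lemma full_cycle_contra {M : Set (BFAlt n r)}
    (hM : isMinUpCoveringSet (bfDom pos neg) M) (i : Fin n)
    (ha : BFAlt.X i ∈ M) (hb : BFAlt.Xb i ∈ M)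
    (hc : BFAlt.X' i ∈ M) (he : BFAlt.Xb' i ∈ M) : False := by
  classical
  obtain ⟨⟨h1, h2⟩, hmin⟩ := hM
  set M' : Set (BFAlt n r) := bfM pos neg M i with hM'def
  have hsub : M' ⊆ M := fun w hw => hw.1.1
  have hXm : ∀ k, BFAlt.X k ∈ M → BFAlt.X k ∈ M' := fun _ h => memX h
  have hX'm : ∀ k, BFAlt.X' k ∈ M → BFAlt.X' k ∈ M' := fun _ h => memX' h
  have hXbm : ∀ k, k ≠ i → BFAlt.Xb k ∈ M → BFAlt.Xb k ∈ M' := fun _ hk h => memXb hk h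
  have hXb'm : ∀ k, k ≠ i → BFAlt.Xb' k ∈ M → BFAlt.Xb' k ∈ M' := fun _ hk h => memXb' hk h
  have hYm : ∀ j, BFAlt.Y j ∈ M → ¬ pos i j → BFAlt.Y j ∈ M' := fun _ h hnp => memY h hnp
  have hbm' : BFAlt.Xb i ∉ M' := fun h => h.1.2.1 rfl
  have hem' : BFAlt.Xb' i ∉ M' := fun h => h.1.2.2.1 rfl
  have hcs : isUpCoveringSet (bfDom pos neg) M' := by
    constructor
    · apply Set.Subset.antisymm (fun x hx => hx.1)
      intro x hx
      refine ⟨hx, ?_⟩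
      rintro ⟨y, hy, hdom, hcov⟩
      cases hdom with
      | cyc1 k =>
        have hki : k ≠ i := fun hk => hx.1.2.1 (by rw [hk])
        obtain ⟨z, hz, hzy, hzx⟩ := IS h1 hx.1.1 hy.1.1 (bfDom.cyc1 k)
        rcases inv_X hzy with rfl
        exact hzx (hcov _ (hXb'm k hki hz) hzy)
      | cyc2 k =>
        obtain ⟨z, hz, hzy, hzx⟩ := IS h1 hx.1.1 hy.1.1 (bfDom.cyc2 k)
        rcases inv_Xb hzy with rfl
        exact hzx (hcov _ (hXm k hz) hzy)
      | cyc3 k =>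
        have hki : k ≠ i := fun hk => hx.1.2.2.1 (by rw [hk])
        obtain ⟨z, hz, hzy, hzx⟩ := IS h1 hx.1.1 hy.1.1 (bfDom.cyc3 k)
        rcases inv_X' hzy with rfl
        exact hzx (hcov _ (hXbm k hki hz) hzy)
      | cyc4 k =>
        obtain ⟨z, hz, hzy, hzx⟩ := IS h1 hx.1.1 hy.1.1 (bfDom.cyc4 k)
        rcases inv_Xb' hzy with rfl
        exact hzx (hcov _ (hX'm k hz) hzy)
      | pos_lit k j hpj =>
        have hnp : ¬ pos i j := hx.1.2.2.2 j rfl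
        have hki : k ≠ i := fun hk => hnp (hk ▸ hpj)
        obtain ⟨z, hz, hzy, hzx⟩ := IS h1 hx.1.1 hy.1.1 (bfDom.pos_lit k j hpj)
        rcases inv_X hzy with rfl
        exact hzx (hcov _ (hXb'm k hki hz) hzy)
      | neg_lit k j hnj =>
        obtain ⟨z, hz, hzy, hzx⟩ := IS h1 hx.1.1 hy.1.1 (bfDom.neg_lit k j hnj)
        rcases inv_Xb hzy with rfl
        exact hzx (hcov _ (hXm k hz) hzy)
      | yd j =>
        have hnp : ¬ bfP pos neg M i := hx.2 rfl
        by_cases hex : ∃ z ∈ bfBase pos M i, bfDom pos neg z (.Y j)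
        · obtain ⟨z, hzb, hzy⟩ := hex
          have hzM' : z ∈ M' :=
            ⟨hzb, fun hzd => False.elim (by rw [hzd] at hzy; cases hzy)⟩
          have hd := hcov z hzM' hzy
          rcases inv_Y hzy with ⟨k, rfl, -⟩ | ⟨k, rfl, -⟩ <;> cases hd
        · exact hnp ⟨j, hy.1, fun z hz hzy => hex ⟨z, hz, hzy⟩⟩
    · intro x hx hunc
      apply hunc.2
      cases x with
      | X k =>
        have hxM : BFAlt.X k ∉ M := fun h => hx (hXm k h)
        have hki : k ≠ i := fun hk => hxM (hk ▸ ha)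
        obtain ⟨y, hyM, hd, hcv⟩ := ES h2 hxM
        rcases inv_X hd with rfl
        refine ⟨_, Set.mem_insert_of_mem _ (hXb'm k hki hyM), bfDom.cyc4 k, ?_⟩
        intro z hz hzy
        rcases inv_Xb' hzy with rfl
        rcases hz with hz | hz
        · cases hz
        · exact hcv _ (Set.mem_insert_of_mem _ (hsub hz)) (bfDom.cyc3 k)
      | Xb k =>
        by_cases hk : k = i
        · subst hk
          refine ⟨_, Set.mem_insert_of_mem _ (hXm k ha), bfDom.cyc1 k, ?_⟩
          intro z hz hzy
          rcases inv_X hzy with rfl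
          rcases hz with hz | hz
          · cases hz
          · exact absurd hz hem'
        · have hxM : BFAlt.Xb k ∉ M := fun h => hx (hXbm k hk h)
          obtain ⟨y, hyM, hd, hcv⟩ := ES h2 hxM
          rcases inv_Xb hd with rfl
          refine ⟨_, Set.mem_insert_of_mem _ (hXm k hyM), bfDom.cyc1 k, ?_⟩
          intro z hz hzy
          rcases inv_X hzy with rfl
          rcases hz with hz | hz
          · cases hz
          · exact hcv _ (Set.mem_insert_of_mem _ (hsub hz)) (bfDom.cyc4 k)
      | X' k =>
        have hxM : BFAlt.X' k ∉ M := fun h => hx (hX'm k h)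
        have hki : k ≠ i := fun hk => hxM (hk ▸ hc)
        obtain ⟨y, hyM, hd, hcv⟩ := ES h2 hxM
        rcases inv_X' hd with rfl
        refine ⟨_, Set.mem_insert_of_mem _ (hXbm k hki hyM), bfDom.cyc2 k, ?_⟩
        intro z hz hzy
        rcases inv_Xb hzy with rfl
        rcases hz with hz | hz
        · cases hz
        · exact hcv _ (Set.mem_insert_of_mem _ (hsub hz)) (bfDom.cyc1 k)
      | Xb' k =>
        by_cases hk : k = i
        · subst hk
          refine ⟨_, Set.mem_insert_of_mem _ (hX'm k hc), bfDom.cyc3 k, ?_⟩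
          intro z hz hzy
          rcases inv_X' hzy with rfl
          rcases hz with hz | hz
          · cases hz
          · exact absurd hz hbm'
        · have hxM : BFAlt.Xb' k ∉ M := fun h => hx (hXb'm k hk h)
          obtain ⟨y, hyM, hd, hcv⟩ := ES h2 hxM
          rcases inv_Xb' hd with rfl
          refine ⟨_, Set.mem_insert_of_mem _ (hX'm k hyM), bfDom.cyc3 k, ?_⟩
          intro z hz hzy
          rcases inv_X' hzy with rfl
          rcases hz with hz | hz
          · cases hz
          · exact hcv _ (Set.mem_insert_of_mem _ (hsub hz)) (bfDom.cyc2 k)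
      | Y j =>
        by_cases hjM : BFAlt.Y j ∈ M
        · have hp : pos i j := by
            by_contra hnp
            exact hx (hYm j hjM hnp)
          refine ⟨_, Set.mem_insert_of_mem _ (hXm i ha), bfDom.pos_lit i j hp, ?_⟩
          intro z hz hzy
          rcases inv_X hzy with rfl
          rcases hz with hz | hz
          · cases hz
          · exact absurd hz hem'
        · obtain ⟨y, hyM, hd, hcv⟩ := ES h2 hjM
          rcases inv_Y hd with ⟨k, rfl, hpk⟩ | ⟨k, rfl, hnk⟩
          · have hbk : BFAlt.Xb' k ∉ M := fun h =>
              absurd (hcv _ (Set.mem_insert_of_mem _ h) (bfDom.cyc4 k))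
                (fun hh => nomatch hh)
            refine ⟨_, Set.mem_insert_of_mem _ (hXm k hyM), bfDom.pos_lit k j hpk, ?_⟩
            intro z hz hzy
            rcases inv_X hzy with rfl
            rcases hz with hz | hz
            · cases hz
            · exact absurd (hsub hz) hbk
          · by_cases hk : k = i
            · subst hk
              have hp : pos k j := by
                have hdd := hcv _ (Set.mem_insert_of_mem _ ha) (bfDom.cyc1 k)
                cases hdd with
                | pos_lit _ _ hp => exact hp
              refine ⟨_, Set.mem_insert_of_mem _ (hXm k ha), bfDom.pos_lit k j hp, ?_⟩
              intro z hz hzy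
              rcases inv_X hzy with rfl
              rcases hz with hz | hz
              · cases hz
              · exact absurd hz hem'
            · refine ⟨_, Set.mem_insert_of_mem _ (hXbm k hk hyM), bfDom.neg_lit k j hnk, ?_⟩
              intro z hz hzy
              rcases inv_Xb hzy with rfl
              rcases hz with hz | hz
              · cases hz
              · exact hcv _ (Set.mem_insert_of_mem _ (hsub hz)) (bfDom.cyc1 k)
      | D =>
        by_cases hD : BFAlt.D ∈ M
        · have hPP : bfP pos neg M i := by
            by_contra hnp
            exact hx (memD hD hnp)
          obtain ⟨j, hjb, hnod⟩ := hPP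
          have hjM' : BFAlt.Y j ∈ M' := memYbase hjb
          refine ⟨_, Set.mem_insert_of_mem _ hjM', bfDom.yd j, ?_⟩
          intro z hz hzy
          rcases hz with hz | hz
          · rw [hz] at hzy; cases hzy
          · exact absurd hzy (hnod z hz.1)
        · obtain ⟨y, hyM, hd, hcv⟩ := ES h2 hD
          rcases inv_D hd with ⟨j, rfl⟩
          have hnp : ¬ pos i j := fun hp =>
            absurd (hcv _ (Set.mem_insert_of_mem _ ha) (bfDom.pos_lit i j hp))
              (fun hh => nomatch hh)
          refine ⟨_, Set.mem_insert_of_mem _ (hYm j hyM hnp), bfDom.yd j, ?_⟩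
          intro z hz hzy
          rcases hz with hz | hz
          · rw [hz] at hzy; cases hzy
          · exact hcv _ (Set.mem_insert_of_mem _ (hsub hz)) hzy
  have hss : M' ⊂ M := (Set.ssubset_iff_of_subset hsub).2 ⟨_, hb, hbm'⟩
  exact hmin M' hss hcs

end

section
variable {n r : ℕ} {pos neg : Fin n → Fin r → Prop} {M : Set (BFAlt n r)}

lemma notX (h2 : ∀ x ∉ M, x ∉ upUncovered (bfDom pos neg) (insert x M))
    (k : Fin n) (hnx : BFAlt.X k ∉ M) : BFAlt.Xb' k ∈ M ∧ BFAlt.X' k ∉ M := by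
  obtain ⟨y, hy, hd, hcv⟩ := ES h2 hnx
  rcases inv_X hd with rfl
  refine ⟨hy, fun h' => ?_⟩
  have hh := hcv _ (Set.mem_insert_of_mem _ h') (bfDom.cyc3 k)
  cases hh

lemma notXb (h2 : ∀ x ∉ M, x ∉ upUncovered (bfDom pos neg) (insert x M))
    (k : Fin n) (hnx : BFAlt.Xb k ∉ M) : BFAlt.X k ∈ M ∧ BFAlt.Xb' k ∉ M := by
  obtain ⟨y, hy, hd, hcv⟩ := ES h2 hnx
  rcases inv_Xb hd with rfl
  refine ⟨hy, fun h' => ?_⟩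
  have hh := hcv _ (Set.mem_insert_of_mem _ h') (bfDom.cyc4 k)
  cases hh

lemma notX' (h2 : ∀ x ∉ M, x ∉ upUncovered (bfDom pos neg) (insert x M))
    (k : Fin n) (hnx : BFAlt.X' k ∉ M) : BFAlt.Xb k ∈ M ∧ BFAlt.X k ∉ M := by
  obtain ⟨y, hy, hd, hcv⟩ := ES h2 hnx
  rcases inv_X' hd with rfl
  refine ⟨hy, fun h' => ?_⟩
  have hh := hcv _ (Set.mem_insert_of_mem _ h') (bfDom.cyc1 k)
  cases hh

lemma notXb' (h2 : ∀ x ∉ M, x ∉ upUncovered (bfDom pos neg) (insert x M))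
    (k : Fin n) (hnx : BFAlt.Xb' k ∉ M) : BFAlt.X' k ∈ M ∧ BFAlt.Xb k ∉ M := by
  obtain ⟨y, hy, hd, hcv⟩ := ES h2 hnx
  rcases inv_Xb' hd with rfl
  refine ⟨hy, fun h' => ?_⟩
  have hh := hcv _ (Set.mem_insert_of_mem _ h') (bfDom.cyc2 k)
  cases hh

end

theorem bf_minimal_contains_exactly_one_pair {n r : ℕ}
    (pos neg : Fin n → Fin r → Prop)
    (M : Set (BFAlt n r)) (hM : isMinUpCoveringSet (bfDom pos neg) M) :
    ∀ i : Fin n,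
      (BFAlt.X i ∈ M ∧ BFAlt.X' i ∈ M ∧ BFAlt.Xb i ∉ M ∧ BFAlt.Xb' i ∉ M) ∨
      (BFAlt.Xb i ∈ M ∧ BFAlt.Xb' i ∈ M ∧ BFAlt.X i ∉ M ∧ BFAlt.X' i ∉ M) := by
  classical
  intro i
  have h2 := hM.1.2
  by_cases hA : BFAlt.X i ∈ M
  · by_cases hC : BFAlt.X' i ∈ M
    · by_cases hB : BFAlt.Xb i ∈ M
      · have hE : BFAlt.Xb' i ∈ M := by
          by_contra hE
          exact (notXb' h2 i hE).2 hB
        exact (full_cycle_contra hM i hA hB hC hE).elim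
      · left
        exact ⟨hA, hC, hB, (notXb h2 i hB).2⟩
    · exact absurd hA (notX' h2 i hC).2
  · right
    obtain ⟨hE, hC⟩ := notX h2 i hA
    obtain ⟨hB, -⟩ := notX' h2 i hC
    exact ⟨hB, hE, hA, hC⟩
end

section
/- In the downward-covering construction from a CNF formula φ (Construction 3 of the paper), if a minimal downward covering set M for A contains the alternative d, then M = A, i.e., M contains all alternatives. -/
def downCovers {α : Type*} (dom : α → α → Prop) (B : Set α) (x y : α) : Prop :=
  dom x y ∧ ∀ z ∈ B, dom y z → dom x z

def downUncovered {α : Type*} (dom : α → α → Prop) (B : Set α) : Set α :=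
  {x | x ∈ B ∧ ¬ ∃ y ∈ B, downCovers dom B y x}

def isDownCoveringSet {α : Type*} (dom : α → α → Prop) (M : Set α) : Prop :=
  downUncovered dom M = M ∧ ∀ x ∉ M, x ∉ downUncovered dom (insert x M)

def isMinDownCoveringSet {α : Type*} (dom : α → α → Prop) (M : Set α) : Prop :=
  isDownCoveringSet dom M ∧ ∀ M' ⊂ M, ¬ isDownCoveringSet dom M'

inductive DBase (k l : ℕ) where
  | X : Fin k → DBase k l
  | X' : Fin k → DBase k l
  | X'' : Fin k → DBase k l
  | Xb : Fin k → DBase k l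
  | Xb' : Fin k → DBase k l
  | Xb'' : Fin k → DBase k l
  | Z : Fin k → DBase k l
  | Z' : Fin k → DBase k l
  | Z'' : Fin k → DBase k l
  | Y : Fin l → DBase k l

inductive DAlt (k l : ℕ) where
  | base : DBase k l → DAlt k l
  | hat : DBase k l → DAlt k l
  | b : DAlt k l
  | c : DAlt k l
  | d : DAlt k l

inductive dDom {k l : ℕ} (pos neg : Fin k → Fin l → Prop) :
    DAlt k l → DAlt k l → Prop where
  -- 6-cycle
  | e1 (i : Fin k) : dDom pos neg (.base (.X i)) (.base (.Xb i))
  | e2 (i : Fin k) : dDom pos neg (.base (.Xb i)) (.base (.X' i))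
  | e3 (i : Fin k) : dDom pos neg (.base (.X' i)) (.base (.Xb' i))
  | e4 (i : Fin k) : dDom pos neg (.base (.Xb' i)) (.base (.X'' i))
  | e5 (i : Fin k) : dDom pos neg (.base (.X'' i)) (.base (.Xb'' i))
  | e6 (i : Fin k) : dDom pos neg (.base (.Xb'' i)) (.base (.X i))
  -- nested 3-cycles
  | t1 (i : Fin k) : dDom pos neg (.base (.X i)) (.base (.X' i))
  | t2 (i : Fin k) : dDom pos neg (.base (.X' i)) (.base (.X'' i))
  | t3 (i : Fin k) : dDom pos neg (.base (.X'' i)) (.base (.X i))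
  | t4 (i : Fin k) : dDom pos neg (.base (.Xb i)) (.base (.Xb' i))
  | t5 (i : Fin k) : dDom pos neg (.base (.Xb' i)) (.base (.Xb'' i))
  | t6 (i : Fin k) : dDom pos neg (.base (.Xb'' i)) (.base (.Xb i))
  -- z-edges
  | z1 (i : Fin k) : dDom pos neg (.base (.Z' i)) (.base (.Z i))
  | z2 (i : Fin k) : dDom pos neg (.base (.Z'' i)) (.base (.Z i))
  | z3 (i : Fin k) : dDom pos neg (.base (.Z i)) (.base (.X i))
  | z4 (i : Fin k) : dDom pos neg (.base (.Z i)) (.base (.Xb i))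
  | z5 (i : Fin k) : dDom pos neg (.base (.Z' i)) (.base (.X i))
  | z6 (i : Fin k) : dDom pos neg (.base (.Z'' i)) (.base (.Xb i))
  | dz (i : Fin k) : dDom pos neg .d (.base (.Z i))
  -- literals
  | pos_lit (i : Fin k) (j : Fin l) : pos i j → dDom pos neg (.base (.X i)) (.base (.Y j))
  | neg_lit (i : Fin k) (j : Fin l) : neg i j → dDom pos neg (.base (.Xb i)) (.base (.Y j))
  -- hat edges
  | bh (a : DBase k l) : dDom pos neg .b (.hat a)
  | ah (a : DBase k l) : dDom pos neg (.base a) (.hat a)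
  | hd (a : DBase k l) : dDom pos neg (.hat a) .d
  -- d and c
  | dy (j : Fin l) : dDom pos neg .d (.base (.Y j))
  | cd : dDom pos neg .c .d

theorem cons3_d_in_minimal_implies_all {k l : ℕ} (pos neg : Fin k → Fin l → Prop)
    (M : Set (DAlt k l)) (hM : isMinDownCoveringSet (dDom pos neg) M)
    (hd : DAlt.d ∈ M) :
    M = Set.univ := by
  obtain ⟨⟨hint, hext⟩, _⟩ := hM
  have hcov : ∀ x ∉ M, ∃ y ∈ insert x M, downCovers (dDom pos neg) (insert x M) y x := by
    intro x hx
    have h := hext x hx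
    simp only [downUncovered, Set.mem_setOf_eq, not_and, not_not] at h
    exact h (Set.mem_insert x M)
  have hb : DAlt.b ∈ M := by
    by_contra hb
    obtain ⟨y, hy, hdom, _⟩ := hcov _ hb
    cases hdom
  have hc : DAlt.c ∈ M := by
    by_contra hc
    obtain ⟨y, hy, hdom, _⟩ := hcov _ hc
    cases hdom
  have hhat : ∀ a : DBase k l, DAlt.hat a ∈ M := by
    intro a
    by_contra ha
    obtain ⟨y, hy, hdom, hall⟩ := hcov _ ha
    have hyd : dDom pos neg y DAlt.d :=
      hall DAlt.d (Set.mem_insert_of_mem _ hd) (dDom.hd a)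
    cases hdom <;> cases hyd
  have hbase : ∀ a : DBase k l, DAlt.base a ∈ M := by
    intro a
    by_contra ha
    obtain ⟨y, hy, hdom, hall⟩ := hcov _ ha
    have hyh : dDom pos neg y (DAlt.hat a) :=
      hall _ (Set.mem_insert_of_mem _ (hhat a)) (dDom.ah a)
    cases hyh <;> cases hdom
  ext x
  simp only [Set.mem_univ, iff_true]
  cases x with
  | base a => exact hbase a
  | hat a => exact hhat a
  | b => exact hb
  | c => exact hc
  | d => exact hd
end

section
/- In the downward-covering construction from a CNF formula φ (Construction 3 of the paper), φ is satisfiable if and only if no minimal downward covering set for A contains the alternative d. -/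
namespace Cons3

instance {k l : ℕ} : Fintype (DBase k l) := derive_fintype% _
instance {k l : ℕ} : Fintype (DAlt k l) := derive_fintype% _

variable {k l : ℕ} {pos neg : Fin k → Fin l → Prop}

lemma dDom_irrefl (v : DAlt k l) : ¬ dDom pos neg v v := by
  intro h; cases h

/-- A handy restatement of `isDownCoveringSet`. -/
lemma covering_iff {α : Type*} (dom : α → α → Prop) (M : Set α) :
    isDownCoveringSet dom M ↔
      ((∀ x ∈ M, ¬ ∃ y ∈ M, downCovers dom M y x) ∧
       ∀ x ∉ M, ∃ y ∈ insert x M, downCovers dom (insert x M) y x) := by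
  unfold isDownCoveringSet downUncovered
  constructor
  · rintro ⟨h1, h2⟩
    refine ⟨fun x hx => ?_, fun x hx => ?_⟩
    · rw [← h1] at hx; exact hx.2
    · have := h2 x hx
      simp only [Set.mem_setOf_eq, not_and, not_not] at this
      exact this (Set.mem_insert x M)
  · rintro ⟨h1, h2⟩
    refine ⟨?_, fun x hx => ?_⟩
    · ext x; simp only [Set.mem_setOf_eq]
      exact ⟨fun h => h.1, fun hx => ⟨hx, h1 x hx⟩⟩
    · simp only [Set.mem_setOf_eq, not_and, not_not]
      intro _; exact h2 x hx

/-- The universal set is internally and externally stable (when `l ≥ 1`). -/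
lemma univ_covering (j0 : Fin l) :
    isDownCoveringSet (dDom pos (k := k) neg) Set.univ := by
  rw [covering_iff]
  refine ⟨?_, fun x hx => absurd (Set.mem_univ x) hx⟩
  rintro x - ⟨y, -, hdom, hcov⟩
  cases x with
  | base a =>
    have h2 := hcov (.hat a) trivial (.ah a)
    cases hdom <;> cases h2
  | hat a =>
    have h2 := hcov .d trivial (.hd a)
    cases hdom <;> cases h2
  | b => cases hdom
  | c => cases hdom
  | d =>
    have h2 := hcov (.base (.Y j0)) trivial (.dy j0)
    cases hdom <;> cases h2

/-- Any covering set containing `d` is the universal set. -/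
lemma eq_univ_of_d_mem {M : Set (DAlt k l)}
    (hM : isDownCoveringSet (dDom pos neg) M) (hd : DAlt.d ∈ M) :
    M = Set.univ := by
  rw [covering_iff] at hM
  obtain ⟨hint, hext⟩ := hM
  have hhat : ∀ a : DBase k l, DAlt.hat a ∈ M := by
    intro a
    by_contra h
    obtain ⟨y, hy, hdom, hcov⟩ := hext _ h
    have h2 := hcov .d (Set.mem_insert_of_mem _ hd) (.hd a)
    cases hdom <;> cases h2
  have hbase : ∀ a : DBase k l, DAlt.base a ∈ M := by
    intro a
    by_contra h
    obtain ⟨y, hy, hdom, hcov⟩ := hext _ h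
    have h2 := hcov (.hat a) (Set.mem_insert_of_mem _ (hhat a)) (.ah a)
    cases hdom <;> cases h2
  have hb : DAlt.b ∈ M := by
    by_contra h
    obtain ⟨y, hy, hdom, hcov⟩ := hext _ h
    cases hdom
  have hc : DAlt.c ∈ M := by
    by_contra h
    obtain ⟨y, hy, hdom, hcov⟩ := hext _ h
    cases hdom
  ext v
  simp only [Set.mem_univ, iff_true]
  cases v with
  | base a => exact hbase a
  | hat a => exact hhat a
  | b => exact hb
  | c => exact hc
  | d => exact hd

/-- From a covering set not containing `d`, extract a satisfying assignment. -/
lemma sat_of_covering_d_not_mem {M : Set (DAlt k l)}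
    (hM : isDownCoveringSet (dDom pos neg) M) (hd : DAlt.d ∉ M) :
    ∃ a : Fin k → Bool, ∀ j : Fin l, ∃ i : Fin k,
      (pos i j ∧ a i = true) ∨ (neg i j ∧ a i = false) := by
  classical
  rw [covering_iff] at hM
  obtain ⟨hint, hext⟩ := hM
  -- nothing in M is dominated by d
  have hno : ∀ z ∈ M, ¬ dDom pos neg .d z := by
    obtain ⟨y, hy, hdom, hcov⟩ := hext _ hd
    intro z hz hdz
    have h2 := hcov z (Set.mem_insert_of_mem _ hz) hdz
    cases hdom <;> cases hdz <;> cases h2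
  have hZ : ∀ i : Fin k, DAlt.base (.Z i) ∉ M := fun i h => hno _ h (.dz i)
  have hY : ∀ j : Fin l, DAlt.base (.Y j) ∉ M := fun j h => hno _ h (.dy j)
  -- not both X i and Xb i in M
  have hnotboth : ∀ i : Fin k,
      ¬ (DAlt.base (.X i) ∈ M ∧ DAlt.base (.Xb i) ∈ M) := by
    intro i ⟨hX, hXb⟩
    obtain ⟨y, hy, hdom, hcov⟩ := hext _ (hZ i)
    cases hdom with
    | z1 =>
      have h2 := hcov (.base (.Xb i)) (Set.mem_insert_of_mem _ hXb) (.z4 i)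
      cases h2
    | z2 =>
      have h2 := hcov (.base (.X i)) (Set.mem_insert_of_mem _ hX) (.z3 i)
      cases h2
    | dz =>
      rcases hy with h | h
      · cases h
      · exact hd h
  refine ⟨fun i => if DAlt.base (.X i) ∈ M then true else false, fun j => ?_⟩
  obtain ⟨y, hy, hdom, hcov⟩ := hext _ (hY j)
  cases hdom with
  | pos_lit i j hp =>
    have hXi : DAlt.base (.X i) ∈ M := by
      rcases hy with h | h
      · cases h
      · exact h
    exact ⟨i, Or.inl ⟨hp, if_pos hXi⟩⟩
  | neg_lit i j hn =>
    have hXbi : DAlt.base (.Xb i) ∈ M := by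
      rcases hy with h | h
      · cases h
      · exact h
    exact ⟨i, Or.inr ⟨hn, if_neg (fun hXi => hnotboth i ⟨hXi, hXbi⟩)⟩⟩
  | dy =>
    rcases hy with h | h
    · cases h
    · exact absurd h hd

/-- The assignment set. -/
def Ma (k l : ℕ) (a : Fin k → Bool) : Set (DAlt k l) :=
  {v | match v with
    | .b => True
    | .c => True
    | .base (.Z' _) => True
    | .base (.Z'' _) => True
    | .base (.X i) => a i = true
    | .base (.X' i) => a i = true
    | .base (.X'' i) => a i = true
    | .base (.Xb i) => a i = false
    | .base (.Xb' i) => a i = false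
    | .base (.Xb'' i) => a i = false
    | _ => False}

lemma Ma_covering (a : Fin k → Bool)
    (hsat : ∀ j : Fin l, ∃ i : Fin k,
      (pos i j ∧ a i = true) ∨ (neg i j ∧ a i = false)) :
    isDownCoveringSet (dDom pos neg) (Ma k l a) := by
  rw [covering_iff]
  constructor
  · -- internal stability
    rintro x hx ⟨y, hy, hdom, hcov⟩
    cases hdom with
    | e1 i => simp [Ma] at hx hy; rw [hx] at hy; cases hy
    | e2 i => simp [Ma] at hx hy; rw [hx] at hy; cases hy
    | e3 i => simp [Ma] at hx hy; rw [hx] at hy; cases hy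
    | e4 i => simp [Ma] at hx hy; rw [hx] at hy; cases hy
    | e5 i => simp [Ma] at hx hy; rw [hx] at hy; cases hy
    | e6 i => simp [Ma] at hx hy; rw [hx] at hy; cases hy
    | t1 i =>
      have h2 := hcov (.base (.X'' i)) (by simpa [Ma] using hx) (.t2 i)
      cases h2
    | t2 i =>
      have h2 := hcov (.base (.X i)) (by simpa [Ma] using hx) (.t3 i)
      cases h2
    | t3 i =>
      have h2 := hcov (.base (.X' i)) (by simpa [Ma] using hx) (.t1 i)
      cases h2
    | t4 i =>
      have h2 := hcov (.base (.Xb'' i)) (by simpa [Ma] using hx) (.t5 i)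
      cases h2
    | t5 i =>
      have h2 := hcov (.base (.Xb i)) (by simpa [Ma] using hx) (.t6 i)
      cases h2
    | t6 i =>
      have h2 := hcov (.base (.Xb' i)) (by simpa [Ma] using hx) (.t4 i)
      cases h2
    | z1 i => simp [Ma] at hx
    | z2 i => simp [Ma] at hx
    | z3 i => simp [Ma] at hy
    | z4 i => simp [Ma] at hy
    | z5 i =>
      have h2 := hcov (.base (.X' i)) (by simpa [Ma] using hx) (.t1 i)
      cases h2
    | z6 i =>
      have h2 := hcov (.base (.Xb' i)) (by simpa [Ma] using hx) (.t4 i)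
      cases h2
    | dz i => simp [Ma] at hx
    | pos_lit i j hp => simp [Ma] at hx
    | neg_lit i j hn => simp [Ma] at hx
    | bh b => simp [Ma] at hx
    | ah b => simp [Ma] at hx
    | hd b => simp [Ma] at hx
    | dy j => simp [Ma] at hx
    | cd => simp [Ma] at hx
  · -- external stability
    intro x hx
    cases x with
    | d =>
      refine ⟨.c, Set.mem_insert_of_mem _ (by simp [Ma]), .cd, ?_⟩
      intro z hz hdz
      cases hdz <;> simp [Ma] at hz
    | hat a0 =>
      refine ⟨.b, Set.mem_insert_of_mem _ (by simp [Ma]), .bh a0, ?_⟩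
      intro z hz hdz
      cases hdz <;> simp [Ma] at hz
    | b => simp [Ma] at hx
    | c => simp [Ma] at hx
    | base b0 =>
      cases b0 with
      | Y j =>
        obtain ⟨i, ⟨hp, hai⟩ | ⟨hn, hai⟩⟩ := hsat j
        · refine ⟨.base (.X i), Set.mem_insert_of_mem _ (by simp [Ma, hai]),
            .pos_lit i j hp, ?_⟩
          intro z hz hdz
          cases hdz <;> simp [Ma] at hz
        · refine ⟨.base (.Xb i), Set.mem_insert_of_mem _ (by simp [Ma, hai]),
            .neg_lit i j hn, ?_⟩
          intro z hz hdz
          cases hdz <;> simp [Ma] at hz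
      | Z' i => simp [Ma] at hx
      | Z'' i => simp [Ma] at hx
      | Z i =>
        cases hai : a i with
        | true =>
          refine ⟨.base (.Z' i), Set.mem_insert_of_mem _ (by simp [Ma]), .z1 i, ?_⟩
          intro z hz hdz
          cases hdz with
          | z3 => exact .z5 i
          | z4 => simp [Ma, hai] at hz
          | ah => simp [Ma] at hz
        | false =>
          refine ⟨.base (.Z'' i), Set.mem_insert_of_mem _ (by simp [Ma]), .z2 i, ?_⟩
          intro z hz hdz
          cases hdz with
          | z3 => simp [Ma, hai] at hz
          | z4 => exact .z6 i
          | ah => simp [Ma] at hz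
      | X i =>
        have hai : a i = false := by simpa [Ma] using hx
        refine ⟨.base (.Xb'' i), Set.mem_insert_of_mem _ (by simp [Ma, hai]), .e6 i, ?_⟩
        intro z hz hdz
        cases hdz with
        | e1 => exact .t6 i
        | t1 => simp [Ma, hai] at hz
        | pos_lit _ _ hp => simp [Ma] at hz
        | ah => simp [Ma] at hz
      | X' i =>
        have hai : a i = false := by simpa [Ma] using hx
        refine ⟨.base (.Xb i), Set.mem_insert_of_mem _ (by simp [Ma, hai]), .e2 i, ?_⟩
        intro z hz hdz
        cases hdz with
        | e3 => exact .t4 i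
        | t2 => simp [Ma, hai] at hz
        | ah => simp [Ma] at hz
      | X'' i =>
        have hai : a i = false := by simpa [Ma] using hx
        refine ⟨.base (.Xb' i), Set.mem_insert_of_mem _ (by simp [Ma, hai]), .e4 i, ?_⟩
        intro z hz hdz
        cases hdz with
        | e5 => exact .t5 i
        | t3 => simp [Ma, hai] at hz
        | ah => simp [Ma] at hz
      | Xb i =>
        have hai : a i = true := by simpa [Ma] using hx
        refine ⟨.base (.X i), Set.mem_insert_of_mem _ (by simp [Ma, hai]), .e1 i, ?_⟩
        intro z hz hdz
        cases hdz with
        | e2 => exact .t1 i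
        | t4 => simp [Ma, hai] at hz
        | neg_lit _ _ hn => simp [Ma] at hz
        | ah => simp [Ma] at hz
      | Xb' i =>
        have hai : a i = true := by simpa [Ma] using hx
        refine ⟨.base (.X' i), Set.mem_insert_of_mem _ (by simp [Ma, hai]), .e3 i, ?_⟩
        intro z hz hdz
        cases hdz with
        | e4 => exact .t2 i
        | t5 => simp [Ma, hai] at hz
        | ah => simp [Ma] at hz
      | Xb'' i =>
        have hai : a i = true := by simpa [Ma] using hx
        refine ⟨.base (.X'' i), Set.mem_insert_of_mem _ (by simp [Ma, hai]), .e5 i, ?_⟩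
        intro z hz hdz
        cases hdz with
        | e6 => exact .t3 i
        | t6 => simp [Ma, hai] at hz
        | ah => simp [Ma] at hz

lemma exists_min {α : Type*} [Finite α] (dom : α → α → Prop) :
    ∀ n (M : Set α), M.ncard ≤ n → isDownCoveringSet dom M →
      ∃ M' ⊆ M, isMinDownCoveringSet dom M' := by
  intro n
  induction n with
  | zero =>
    intro M hcard hcov
    have hM : M = ∅ := by
      rw [← Set.ncard_eq_zero (Set.toFinite M)]; omega
    refine ⟨M, subset_rfl, hcov, fun M' hM' _ => ?_⟩
    rw [hM] at hM'
    exact hM'.2 (Set.empty_subset M')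
  | succ n ih =>
    intro M hcard hcov
    by_cases h' : ∀ M' ⊂ M, ¬ isDownCoveringSet dom M'
    · exact ⟨M, subset_rfl, hcov, h'⟩
    · push_neg at h'
      obtain ⟨M', hsub, hcov'⟩ := h'
      have hlt := Set.ncard_lt_ncard hsub (Set.toFinite M)
      obtain ⟨M'', h1, h2⟩ := ih M' (by omega) hcov'
      exact ⟨M'', h1.trans hsub.subset, h2⟩

end Cons3
theorem cons3_sat_iff_no_minimal_contains_d {k l : ℕ}
    (pos neg : Fin k → Fin l → Prop) :
    (∃ a : Fin k → Bool, ∀ j : Fin l, ∃ i : Fin k,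
        (pos i j ∧ a i = true) ∨ (neg i j ∧ a i = false)) ↔
    (∀ M : Set (DAlt k l),
        isMinDownCoveringSet (dDom pos neg) M → DAlt.d ∉ M) := by
  constructor
  · rintro ⟨a, hsat⟩ M ⟨hMcov, hMmin⟩ hdM
    have hMuniv := Cons3.eq_univ_of_d_mem hMcov hdM
    have hMa := Cons3.Ma_covering (pos := pos) (neg := neg) a hsat
    refine hMmin (Cons3.Ma k l a) ?_ hMa
    rw [hMuniv]
    refine ⟨Set.subset_univ _, fun h => ?_⟩
    have : DAlt.d ∈ Cons3.Ma k l a := h (Set.mem_univ _)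
    simp [Cons3.Ma] at this
  · intro hRHS
    rcases Nat.eq_zero_or_pos l with hl | hl
    · subst hl
      exact ⟨fun _ => true, fun j => j.elim0⟩
    · have huniv := Cons3.univ_covering (pos := pos) (neg := neg) (k := k) ⟨0, hl⟩
      obtain ⟨M, hsub, hmin⟩ :=
        Cons3.exists_min (dDom pos neg) (Set.univ.ncard) Set.univ le_rfl huniv
      exact Cons3.sat_of_covering_d_not_mem hmin.1 (hRHS M hmin)
end
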